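/- The map (x,r) ↦ (x - r, -r) is an order isomorphism from the poset of formal balls B(ℝ≥0∞, d_ℝ) onto the set C = {(a,b) ∈ (ℝ ∪ {∞}) × (-∞,0] : a - b ≥ 0} ordered componentwise. -/

import Mathlib

open scoped ENNReal NNReal Classical

/-- A formal ball: a point together with a non-negative real radius. -/
structure FormalBall (X : Type*) where
  center : X
  radius : ℝ≥0

/-- A quasi-metric on `X`: a `[0,∞]`-valued distance with `d x x = 0`, the triangle
inequality, and `d x y = d y x = 0 → x = y`. -/
structure QuasiMetric (X : Type*) where
  d : X → X → ℝ≥0∞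
  refl : ∀ x, d x x = 0
  triangle : ∀ x y z, d x z ≤ d x y + d y z
  separated : ∀ x y, d x y = 0 → d y x = 0 → x = y

/-- The order on formal balls: `(x,r) ≤ (y,s)` iff `d x y ≤ r - s`
(equivalently `s ≤ r` and `d x y ≤ r - s`). -/
def ballLE {X : Type*} (q : QuasiMetric X) (b c : FormalBall X) : Prop :=
  c.radius ≤ b.radius ∧ q.d b.center c.center ≤ ↑(b.radius - c.radius)

/-- The partial order of formal balls `B(X,d)`. -/
def ballOrder {X : Type*} (q : QuasiMetric X) : PartialOrder (FormalBall X) where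
  le := ballLE q
  le_refl b := ⟨le_rfl, by simp [ballLE, q.refl]⟩
  le_trans a b c hab hbc := ⟨hbc.1.trans hab.1, by
    calc q.d a.center c.center ≤ q.d a.center b.center + q.d b.center c.center :=
          q.triangle _ _ _
      _ ≤ ↑(a.radius - b.radius) + ↑(b.radius - c.radius) := add_le_add hab.2 hbc.2
      _ = ↑(a.radius - c.radius) := by
          rw [← ENNReal.coe_add, tsub_add_tsub_cancel hab.1 hbc.1]⟩
  le_antisymm a b hab hba := by
    have hr : b.radius = a.radius := le_antisymm hab.1 hba.1
    have h1 : q.d a.center b.center = 0 := le_antisymm (by simpa [hr] using hab.2) bot_le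
    have h2 : q.d b.center a.center = 0 := le_antisymm (by simpa [hr] using hba.2) bot_le
    have hc := q.separated _ _ h1 h2
    cases a; cases b; simp_all

/-- The quasi-metric `d_ℝ(x,y) = max (x - y) 0` (truncated subtraction) on `[0,∞]`. -/
noncomputable def drealQM : QuasiMetric ℝ≥0∞ where
  d x y := x - y
  refl x := tsub_self x
  triangle _ _ _ := tsub_le_tsub_add_tsub
  separated x y h1 h2 := le_antisymm (tsub_eq_zero_iff_le.mp h1) (tsub_eq_zero_iff_le.mp h2)

/-- The target set `C = {(a,b) ∈ (ℝ ∪ {∞}) × (-∞,0] : a - b ≥ 0}` (equivalently `b ≤ a`),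
realized inside `EReal × ℝ`. -/
def Cset : Set (EReal × ℝ) := {p | p.1 ≠ ⊥ ∧ p.2 ≤ 0 ∧ (p.2 : EReal) ≤ p.1}

/-- `(x,r) ↦ (x - r, -r)` is an order isomorphism from
`B([0,∞], d_ℝ)` onto `C`, ordered componentwise. -/
theorem ball_dreal_orderIso_C :
    letI := ballOrder drealQM
    let f : FormalBall ℝ≥0∞ → EReal × ℝ :=
      fun b => ((b.center : EReal) - (b.radius : ℝ), -(b.radius : ℝ))
    (∀ b, f b ∈ Cset) ∧ Set.BijOn f Set.univ Cset ∧
      ∀ b c : FormalBall ℝ≥0∞, b ≤ c ↔ f b ≤ f c := by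
  intro f
  have hmem : ∀ b : FormalBall ℝ≥0∞, f ⟨b.center, b.radius⟩ ∈ Cset := by
    rintro ⟨x, r⟩
    induction x using ENNReal.recTopCoe with
    | top =>
        refine ⟨?_, by simp [f], ?_⟩ <;>
          simp [f, Cset, EReal.top_sub_coe]
    | coe a =>
        refine ⟨?_, by simp [f], ?_⟩
        · simp [f, EReal.coe_nnreal_eq_coe_real, ← EReal.coe_sub]
        · simp only [f, EReal.coe_nnreal_eq_coe_real, ← EReal.coe_sub, EReal.coe_le_coe_iff]
          have : (0:ℝ) ≤ a := a.coe_nonneg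
          linarith
  have hmem' : ∀ b, f b ∈ Cset := fun b => hmem b
  refine ⟨hmem', ⟨fun b _ => hmem' b, ?_, ?_⟩, ?_⟩
  · -- injective
    rintro ⟨x, r⟩ - ⟨y, s⟩ - h
    have h2 : -(r:ℝ) = -(s:ℝ) := congrArg Prod.snd h
    have hr : r = s := by exact_mod_cast neg_injective h2
    have h1 : (x : EReal) - (r:ℝ) = (y : EReal) - (r:ℝ) := by
      have := congrArg Prod.fst h; simpa [f, hr] using this
    have hx : (x : EReal) = (y : EReal) := by
      have := congrArg (· + ((r:ℝ):EReal)) h1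
      simpa [EReal.sub_add_cancel] using this
    have := EReal.coe_ennreal_injective hx
    simp [this, hr]
  · -- surjective onto Cset
    rintro ⟨a, t⟩ hp
    obtain ⟨ha, ht, hta⟩ := hp
    dsimp only at ha ht hta
    simp only [Set.mem_image, Set.mem_univ, true_and]
    induction a using EReal.rec with
    | bot => exact absurd rfl ha
    | top =>
        refine ⟨⟨⊤, Real.toNNReal (-t)⟩, ?_⟩
        simp only [f, EReal.coe_ennreal_top, Prod.ext_iff, Real.coe_toNNReal _ (by linarith : (0:ℝ) ≤ -t),
          ← EReal.coe_neg, EReal.top_sub_coe, neg_neg]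
    | coe α =>
        have htα : t ≤ α := by exact_mod_cast hta
        refine ⟨⟨((Real.toNNReal (α - t) : ℝ≥0) : ℝ≥0∞), Real.toNNReal (-t)⟩, ?_⟩
        simp only [f, EReal.coe_nnreal_eq_coe_real, Prod.ext_iff,
          Real.coe_toNNReal _ (by linarith : (0:ℝ) ≤ -t),
          Real.coe_toNNReal _ (by linarith : (0:ℝ) ≤ α - t), ← EReal.coe_sub]
        constructor
        · norm_num
        · norm_num
  · -- order iso
    rintro ⟨x, r⟩ ⟨y, s⟩
    show ballLE drealQM ⟨x, r⟩ ⟨y, s⟩ ↔ _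
    simp only [ballLE, drealQM, f, Prod.le_def, neg_le_neg_iff, NNReal.coe_le_coe]
    induction y using ENNReal.recTopCoe with
    | top =>
        induction x using ENNReal.recTopCoe with
        | top => simp
        | coe a => simp [EReal.coe_nnreal_eq_coe_real, ← EReal.coe_sub, le_top]
    | coe b' =>
        induction x using ENNReal.recTopCoe with
        | top =>
            simp only [EReal.coe_nnreal_eq_coe_real, ← EReal.coe_sub, EReal.coe_ennreal_top]
            constructor
            · rintro ⟨-, h⟩
              rw [ENNReal.top_sub_coe, top_le_iff] at h
              exact absurd h (ENNReal.coe_ne_top)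
            · rintro ⟨h, -⟩
              rw [EReal.top_sub_coe, top_le_iff] at h
              exact absurd h (EReal.coe_ne_top _)
        | coe a =>
            simp only [EReal.coe_nnreal_eq_coe_real, ← ENNReal.coe_sub, ← EReal.coe_sub,
              ENNReal.coe_le_coe, EReal.coe_le_coe_iff]
            constructor
            · rintro ⟨hsr, h⟩
              have h' : (a:ℝ) - b' ≤ (r:ℝ) - s := by
                rcases le_total a b' with hab | hab
                · have : (r - s : ℝ≥0) = ((r:ℝ) - s).toNNReal := by
                    ext; simp [NNReal.coe_sub hsr, hsr]
                  have h0 : (0:ℝ) ≤ (r:ℝ) - s := by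
                    have := NNReal.coe_le_coe.2 hsr; linarith
                  have := NNReal.coe_le_coe.2 hab; linarith
                · have h2 : ((a - b' : ℝ≥0):ℝ) ≤ ((r - s : ℝ≥0):ℝ) := NNReal.coe_le_coe.2 h
                  rw [NNReal.coe_sub hab, NNReal.coe_sub hsr] at h2
                  linarith
              exact ⟨by linarith, hsr⟩
            · rintro ⟨h, hsr⟩
              refine ⟨hsr, ?_⟩
              have : (a:ℝ) - b' ≤ (r:ℝ) - s := by linarith
              rw [← NNReal.coe_le_coe, NNReal.coe_sub hsr]
              rcases le_total a b' with hab | hab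
              · rw [tsub_eq_zero_of_le hab]
                have := NNReal.coe_le_coe.2 hsr
                simp only [NNReal.coe_zero]
                linarith
              · rw [NNReal.coe_sub hab]; linarith
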